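/- arXiv:1204.2900 — 2 statements merged into one kernel-verified Lean document; each statement's English description precedes it below -/
import Mathlib

section
/- Let C be a diagonally neighbour transitive code in H(m,q). Then either C is a frequency permutation array (a constant composition code in which every letter of the alphabet occurs exactly m/q times in each codeword); or C = {(a,…,a)} for a single letter a; or C is one of Rep(m,q), Inj(m,q) (with m < q), or W([m/2],2) (with q = 2 and m ≥ 3 odd), none of which is a constant composition code. -/
open Equiv Pointwise

section HammingDefs

variable {I : Type*} [Fintype I] [DecidableEq I] {q : ℕ}

/-- The permutation of the vertex set of the Hamming graph `H(I,q)` induced by the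
letter permutations `g i` (acting coordinatewise) followed by the coordinate
permutation `σ`:  `(α^x)_i = g_{σ⁻¹ i} (α_{σ⁻¹ i})`. -/
def tvp (g : I → Equiv.Perm (Fin q)) (σ : Equiv.Perm I) : Equiv.Perm (I → Fin q) where
  toFun α i := g (σ⁻¹ i) (α (σ⁻¹ i))
  invFun β i := (g i)⁻¹ (β (σ i))
  left_inv α := by funext i; simp
  right_inv β := by funext i; simp

/-- The automorphism group of the Hamming graph `H(I,q)`: all permutations of the
vertex set preserving adjacency (Hamming distance 1). -/
def autH (I : Type*) [Fintype I] [DecidableEq I] (q : ℕ) :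
    Subgroup (Equiv.Perm (I → Fin q)) where
  carrier := {y | ∀ α β : I → Fin q, hammingDist (y α) (y β) = 1 ↔ hammingDist α β = 1}
  one_mem' := by intro α β; simp
  mul_mem' := by
    intro a b ha hb α β
    rw [Equiv.Perm.mul_apply, Equiv.Perm.mul_apply, ha, hb]
  inv_mem' := by
    intro a ha α β
    simpa using (ha (a⁻¹ α) (a⁻¹ β)).symm

/-- The homomorphism `S_q × S_I → Sym(V(H(I,q)))` whose image is `Diag(S_q) ⋊ L`. -/
def diagLHom (I : Type*) [Fintype I] [DecidableEq I] (q : ℕ) :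
    Equiv.Perm (Fin q) × Equiv.Perm I →* Equiv.Perm (I → Fin q) where
  toFun x := tvp (fun _ => x.1) x.2
  map_one' := by
    ext α i
    simp [tvp]
  map_mul' x y := by
    ext α i
    simp [tvp, mul_inv_rev]

/-- The subgroup `Diag_I(S_q) ⋊ L` of the automorphism group of `H(I,q)`. -/
def diagL (I : Type*) [Fintype I] [DecidableEq I] (q : ℕ) :
    Subgroup (Equiv.Perm (I → Fin q)) :=
  (diagLHom I q).range

/-- The subgroup `L` of pure coordinate permutations of `H(I,q)`. -/
def permL (I : Type*) [Fintype I] [DecidableEq I] (q : ℕ) :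
    Subgroup (Equiv.Perm (I → Fin q)) :=
  ((diagLHom I q).comp (MonoidHom.inr (Equiv.Perm (Fin q)) (Equiv.Perm I))).range

/-- Distance from a vertex to a code. -/
noncomputable def distC (γ : I → Fin q) (C : Set (I → Fin q)) : ℕ :=
  sInf {d | ∃ β ∈ C, hammingDist γ β = d}

/-- The cell `C_i` of the distance partition of the code `C`. -/
def cell (C : Set (I → Fin q)) (i : ℕ) : Set (I → Fin q) :=
  {γ | distC γ C = i}

/-- The covering radius of the code `C`. -/
noncomputable def covRad (C : Set (I → Fin q)) : ℕ :=
  sSup {d | ∃ γ : I → Fin q, distC γ C = d}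

/-- The minimum distance of the code `C`. -/
noncomputable def minDist (C : Set (I → Fin q)) : ℕ :=
  sInf {d | ∃ β ∈ C, ∃ γ ∈ C, β ≠ γ ∧ hammingDist β γ = d}

/-- `S` is an orbit of the subgroup `X` of permutations of the vertex set. -/
def IsOrbitOf (X : Subgroup (Equiv.Perm (I → Fin q))) (S : Set (I → Fin q)) : Prop :=
  ∃ v, S = {w | ∃ x ∈ X, x v = w}

/-- `C` is `X`-neighbour transitive: `X` is a group of automorphisms of the Hamming
graph, and both `C` and its set of neighbours `C_1` are `X`-orbits. -/
def NbrTransitive (X : Subgroup (Equiv.Perm (I → Fin q))) (C : Set (I → Fin q)) : Prop :=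
  X ≤ autH I q ∧ IsOrbitOf X C ∧ IsOrbitOf X (cell C 1)

/-- `C` is `X`-completely transitive: every cell of the distance partition is an `X`-orbit. -/
def ComplTransitive (X : Subgroup (Equiv.Perm (I → Fin q))) (C : Set (I → Fin q)) : Prop :=
  X ≤ autH I q ∧ ∀ i ≤ covRad C, IsOrbitOf X (cell C i)

/-- `C` is diagonally `X`-neighbour transitive. -/
def DiagNbrTransitive (X : Subgroup (Equiv.Perm (I → Fin q))) (C : Set (I → Fin q)) : Prop :=
  NbrTransitive X C ∧ X ≤ diagL I q

/-- The automorphism group of the code `C`: the setwise stabiliser of `C` in the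
automorphism group of the Hamming graph. -/
def autCode (C : Set (I → Fin q)) : Subgroup (Equiv.Perm (I → Fin q)) :=
  autH I q ⊓ MulAction.stabilizer (Equiv.Perm (I → Fin q)) C

/-- Number of occurrences of the letter `a` in the vertex `α`. -/
def cnt (α : I → Fin q) (a : Fin q) : ℕ :=
  (Finset.univ.filter fun i => α i = a).card

/-- The composition `Q(α)` of a vertex: the set of pairs `(a, p)` such that the letter `a`
occurs exactly `p > 0` times in `α`. -/
def compOf (α : I → Fin q) : Set (Fin q × ℕ) :=
  {x | 0 < x.2 ∧ cnt α x.1 = x.2}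

/-- `Num(α)`: the set of pairs `(p, s)` such that exactly `s > 0` distinct letters occur
exactly `p > 0` times in `α`. -/
def numOf (α : I → Fin q) : Set (ℕ × ℕ) :=
  {x | 0 < x.1 ∧ 0 < x.2 ∧ (Finset.univ.filter fun a => cnt α a = x.1).card = x.2}

/-- The repetition code `Rep(I,q)`. -/
def repCode (I : Type*) [Fintype I] [DecidableEq I] (q : ℕ) : Set (I → Fin q) :=
  {α | ∃ a, α = fun _ => a}

/-- The injection code `Inj(I,q)`: all tuples with pairwise distinct entries. -/
def injCode (I : Type*) [Fintype I] [DecidableEq I] (q : ℕ) : Set (I → Fin q) :=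
  {α | Function.Injective α}

/-- The code `All(pq,q)`: all vertices in which every letter occurs exactly `p` times. -/
def allCode (I : Type*) [Fintype I] [DecidableEq I] (q p : ℕ) : Set (I → Fin q) :=
  {α | ∀ a, cnt α a = p}

/-- `C` is `s`-regular. -/
def RegularUpTo (C : Set (I → Fin q)) (s : ℕ) : Prop :=
  ∀ i ≤ s, ∀ γ ∈ cell C i, ∀ γ' ∈ cell C i, ∀ k : ℕ,
    {β ∈ C | hammingDist γ β = k}.ncard = {β ∈ C | hammingDist γ' β = k}.ncard

/-- `C` is completely regular. -/
def ComplRegular (C : Set (I → Fin q)) : Prop :=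
  RegularUpTo C (covRad C)

/-- `C` is a constant composition code: every letter occurs the same positive number of
times in every codeword. -/
def IsCCC (C : Set (I → Fin q)) : Prop :=
  C.Nonempty ∧ ∃ f : Fin q → ℕ, (∀ a, 0 < f a) ∧ ∀ β ∈ C, ∀ a, cnt β a = f a

end HammingDefs

section Weight

/-- The weight of a binary vertex: number of nonzero entries. -/
def wt {m : ℕ} (α : Fin m → Fin 2) : ℕ :=
  (Finset.univ.filter fun i => α i ≠ 0).card

/-- The code `W([m/2],2)`: binary `m`-tuples of weight `(m+1)/2` or `(m-1)/2`. -/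
def wCode (m : ℕ) : Set (Fin m → Fin 2) :=
  {α | wt α = (m+1)/2 ∨ wt α = (m-1)/2}

/-- The code `W([m/2],2)` over a general alphabet (used when `q = 2`): vertices in which
one letter occurs `(m+1)/2` times and another `(m-1)/2` times. -/
def wCodeGen (m q : ℕ) : Set (Fin m → Fin q) :=
  {α | ∃ a b : Fin q, a ≠ b ∧ cnt α a = (m+1)/2 ∧ cnt α b = (m-1)/2}

end Weight

section PermCodes

/-- The vertex `α(g) = (1^g, …, q^g)` of `H(q,q)` associated with a permutation `g`. -/
def alphaVtx {q : ℕ} (g : Equiv.Perm (Fin q)) : Fin q → Fin q := fun i => g i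

/-- The permutation code generated by a set `T` of permutations. -/
def permCode {q : ℕ} (T : Set (Equiv.Perm (Fin q))) : Set (Fin q → Fin q) :=
  alphaVtx '' T

end PermCodes

section Repetition

variable {I : Type*} [Fintype I] [DecidableEq I] {q : ℕ}

/-- The `p`-fold repetition `rep_p(α) = (α,…,α)`, a vertex of `H(p·|I|, q)`. -/
def repv (p : ℕ) (α : I → Fin q) : Fin p × I → Fin q := fun ji => α ji.2

/-- The `p`-fold repetition code `Rep_p(C)`. -/
def repCodeP (p : ℕ) (C : Set (I → Fin q)) : Set (Fin p × I → Fin q) :=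
  repv p '' C

/-- The homomorphism `Sym(V(H(I,q))) × S_p → Sym(V(H(p·|I|,q)))`: the pair `(x,σ)` acts on
`p`-tuples of vertices by `(α_1,…,α_p) ↦ (α_{σ⁻¹(1)}^x, …, α_{σ⁻¹(p)}^x)`. -/
def repHom (p : ℕ) (I : Type*) [Fintype I] [DecidableEq I] (q : ℕ) :
    Equiv.Perm (I → Fin q) × Equiv.Perm (Fin p) →* Equiv.Perm (Fin p × I → Fin q) where
  toFun x :=
    { toFun := fun β ji => x.1 (fun i => β (x.2⁻¹ ji.1, i)) ji.2
      invFun := fun β ji => x.1⁻¹ (fun i => β (x.2 ji.1, i)) ji.2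
      left_inv := by intro β; funext ji; simp
      right_inv := by intro β; funext ji; simp }
  map_one' := by ext β ji; simp
  map_mul' x y := by ext β ji; simp [mul_inv_rev]

end Repetition

theorem Equiv.Perm.inv_apply_self {α : Type*} (f : Equiv.Perm α) (x : α) : f⁻¹ (f x) = x :=
  f.symm_apply_apply x

section AuxProof

open Finset

variable {m q : ℕ}

/-- number of letters occurring exactly `w` times. -/
def nwt (α : Fin m → Fin q) (w : ℕ) : ℕ :=
  (Finset.univ.filter fun a => cnt α a = w).card

lemma cnt_def (α : Fin m → Fin q) (a : Fin q) :
    cnt α a = (Finset.univ.filter fun i => α i = a).card := rfl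

lemma hammingDist_def (x y : Fin m → Fin q) :
    hammingDist x y = (Finset.univ.filter fun i => x i ≠ y i).card := rfl

lemma card_filter_comp_perm {I : Type*} [Fintype I] [DecidableEq I]
    (σ : Equiv.Perm I) (P : I → Prop) [DecidablePred P] :
    (Finset.univ.filter fun i => P (σ i)).card = (Finset.univ.filter P).card := by
  apply Finset.card_bij (fun i _ => σ i)
  · intro a ha
    simp only [Finset.mem_filter, Finset.mem_univ, true_and] at ha ⊢
    exact ha
  · intro a _ b _ hab
    exact σ.injective hab
  · intro b hb
    simp only [Finset.mem_filter, Finset.mem_univ, true_and] at hb ⊢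
    exact ⟨σ⁻¹ b, by simpa using hb, by simp⟩

lemma diagLHom_apply (h : Equiv.Perm (Fin q)) (σ : Equiv.Perm (Fin m))
    (α : Fin m → Fin q) (i : Fin m) :
    diagLHom (Fin m) q (h, σ) α i = h (α (σ⁻¹ i)) := rfl

lemma cnt_diag (h : Equiv.Perm (Fin q)) (σ : Equiv.Perm (Fin m))
    (α : Fin m → Fin q) (c : Fin q) :
    cnt (diagLHom (Fin m) q (h, σ) α) c = cnt α (h⁻¹ c) := by
  rw [cnt_def, cnt_def]
  rw [show (Finset.univ.filter fun i => diagLHom (Fin m) q (h, σ) α i = c)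
      = (Finset.univ.filter fun i => α (σ⁻¹ i) = h⁻¹ c) from
    Finset.filter_congr (fun i _ => by
      rw [diagLHom_apply]
      constructor
      · intro e; rw [← e]; simp
      · intro e; rw [e]; simp)]
  exact card_filter_comp_perm σ⁻¹ (fun j => α j = h⁻¹ c)

lemma nwt_diag (h : Equiv.Perm (Fin q)) (σ : Equiv.Perm (Fin m))
    (α : Fin m → Fin q) (w : ℕ) :
    nwt (diagLHom (Fin m) q (h, σ) α) w = nwt α w := by
  unfold nwt
  rw [show (Finset.univ.filter fun a => cnt (diagLHom (Fin m) q (h, σ) α) a = w)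
      = (Finset.univ.filter fun a => cnt α (h⁻¹ a) = w) from
    Finset.filter_congr (fun a _ => by rw [cnt_diag])]
  exact card_filter_comp_perm h⁻¹ (fun a => cnt α a = w)

variable {X : Subgroup (Equiv.Perm (Fin m → Fin q))}

lemma isOrbit_nonempty {S : Set (Fin m → Fin q)} (hS : IsOrbitOf X S) : S.Nonempty := by
  obtain ⟨v, rfl⟩ := hS
  exact ⟨v, 1, X.one_mem, rfl⟩

lemma isOrbit_trans {S : Set (Fin m → Fin q)} (hS : IsOrbitOf X S)
    {α β : Fin m → Fin q} (hα : α ∈ S) (hβ : β ∈ S) :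
    ∃ x ∈ X, x α = β := by
  obtain ⟨v, rfl⟩ := hS
  obtain ⟨x, hx, rfl⟩ := hα
  obtain ⟨y, hy, rfl⟩ := hβ
  exact ⟨y * x⁻¹, X.mul_mem hy (X.inv_mem hx), by simp⟩

lemma isOrbit_smul_mem {S : Set (Fin m → Fin q)} (hS : IsOrbitOf X S)
    {α : Fin m → Fin q} (hα : α ∈ S) {x} (hx : x ∈ X) : x α ∈ S := by
  obtain ⟨v, rfl⟩ := hS
  obtain ⟨y, hy, rfl⟩ := hα
  exact ⟨x * y, X.mul_mem hx hy, by simp⟩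

lemma nwt_const_on_orbit (hXd : X ≤ diagL (Fin m) q) {S : Set (Fin m → Fin q)}
    (hS : IsOrbitOf X S) {α β : Fin m → Fin q} (hα : α ∈ S) (hβ : β ∈ S) (w : ℕ) :
    nwt α w = nwt β w := by
  obtain ⟨x, hx, rfl⟩ := isOrbit_trans hS hα hβ
  obtain ⟨⟨h, σ⟩, hpair⟩ := hXd hx
  rw [← hpair, nwt_diag]

lemma cnt_update_other (α : Fin m → Fin q) (i : Fin m) (b a : Fin q)
    (ha1 : a ≠ α i) (ha2 : a ≠ b) :
    cnt (Function.update α i b) a = cnt α a := by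
  rw [cnt_def, cnt_def]
  congr 1
  apply Finset.filter_congr
  intro j _
  rcases eq_or_ne j i with rfl | hji
  · rw [Function.update_self]
    exact iff_of_false (fun e => ha2 e.symm) (fun e => ha1 e.symm)
  · rw [Function.update_of_ne hji]

lemma cnt_update_target (α : Fin m → Fin q) (i : Fin m) (b : Fin q) (hb : b ≠ α i) :
    cnt (Function.update α i b) b = cnt α b + 1 := by
  rw [cnt_def, cnt_def]
  have he : (Finset.univ.filter fun j => Function.update α i b j = b)
      = insert i (Finset.univ.filter fun j => α j = b) := by
    ext j
    simp only [mem_filter, mem_univ, true_and, mem_insert]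
    rcases eq_or_ne j i with rfl | hji
    · simp [Function.update_self]
    · simp [Function.update_of_ne hji, hji]
  rw [he, Finset.card_insert_of_notMem (by
    simp only [mem_filter, mem_univ, true_and]
    exact fun h => hb h.symm)]

lemma cnt_update_self (α : Fin m → Fin q) (i : Fin m) (b : Fin q) (hb : b ≠ α i) :
    cnt (Function.update α i b) (α i) + 1 = cnt α (α i) := by
  rw [cnt_def, cnt_def]
  have he : (Finset.univ.filter fun j => α j = α i)
      = insert i (Finset.univ.filter fun j => Function.update α i b j = α i) := by
    ext j
    simp only [mem_filter, mem_univ, true_and, mem_insert]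
    rcases eq_or_ne j i with rfl | hji
    · simp
    · simp [Function.update_of_ne hji, hji]
  rw [he, Finset.card_insert_of_notMem (by
    simp only [mem_filter, mem_univ, true_and]
    rw [Function.update_self]
    exact hb)]

lemma nwt_update (α : Fin m → Fin q) (i : Fin m) (b : Fin q) (hb : b ≠ α i) (w : ℕ) :
    nwt (Function.update α i b) w
      + (if cnt α (α i) = w then 1 else 0) + (if cnt α b = w then 1 else 0)
    = nwt α w + (if cnt α (α i) - 1 = w then 1 else 0)
      + (if cnt α b + 1 = w then 1 else 0) := by
  classical
  have hcb : α i ≠ b := fun e => hb e.symm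
  have hsub : ({α i, b} : Finset (Fin q)) ⊆ Finset.univ := Finset.subset_univ _
  have key : ∀ β : Fin m → Fin q,
      nwt β w = (∑ a ∈ Finset.univ \ {α i, b}, if cnt β a = w then 1 else 0)
        + ((if cnt β (α i) = w then 1 else 0) + (if cnt β b = w then 1 else 0)) := by
    intro β
    rw [nwt, Finset.card_filter, ← Finset.sum_sdiff hsub, Finset.sum_pair hcb]
  have hdiff : ∀ a ∈ Finset.univ \ ({α i, b} : Finset (Fin q)),
      (if cnt (Function.update α i b) a = w then (1:ℕ) else 0)
        = (if cnt α a = w then 1 else 0) := by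
    intro a ha
    rw [mem_sdiff, mem_insert, mem_singleton] at ha
    push_neg at ha
    rw [cnt_update_other α i b a ha.2.1 ha.2.2]
  have h1 : cnt (Function.update α i b) (α i) = cnt α (α i) - 1 := by
    have := cnt_update_self α i b hb; omega
  have h2 : cnt (Function.update α i b) b = cnt α b + 1 := cnt_update_target α i b hb
  rw [key, key, Finset.sum_congr rfl hdiff, h1, h2]
  ring

lemma hammingDist_update (α : Fin m → Fin q) (i : Fin m) (b : Fin q) (hb : b ≠ α i) :
    hammingDist α (Function.update α i b) = 1 := by
  rw [hammingDist_def]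
  have he : (Finset.univ.filter fun j => α j ≠ Function.update α i b j) = {i} := by
    ext j
    simp only [mem_filter, mem_univ, true_and, mem_singleton]
    rcases eq_or_ne j i with rfl | hji
    · rw [Function.update_self]
      exact iff_of_true (fun e => hb e.symm) rfl
    · rw [Function.update_of_ne hji]
      simp [hji]
  rw [he, Finset.card_singleton]

lemma hammingDist_update_toward (γ β : Fin m → Fin q) (i : Fin m) (h : γ i ≠ β i) :
    hammingDist (Function.update γ i (β i)) β + 1 = hammingDist γ β := by
  rw [hammingDist_def, hammingDist_def]
  have he : (Finset.univ.filter fun j => Function.update γ i (β i) j ≠ β j)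
      = (Finset.univ.filter fun j => γ j ≠ β j).erase i := by
    ext j
    simp only [mem_filter, mem_univ, true_and, mem_erase]
    rcases eq_or_ne j i with rfl | hji
    · simp [Function.update_self]
    · rw [Function.update_of_ne hji]
      simp [hji]
  rw [he, Finset.card_erase_add_one (by
    simp only [mem_filter, mem_univ, true_and]; exact h)]

lemma hammingDist_update_keep (γ β : Fin m → Fin q) (j : Fin m) (c : Fin q)
    (h1 : γ j ≠ β j) (h2 : c ≠ β j) :
    hammingDist (Function.update γ j c) β = hammingDist γ β := by
  rw [hammingDist_def, hammingDist_def]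
  congr 1
  apply Finset.filter_congr
  intro x _
  rcases eq_or_ne x j with rfl | hxj
  · rw [Function.update_self]
    exact iff_of_true h2 h1
  · rw [Function.update_of_ne hxj]

lemma distC_self {C : Set (Fin m → Fin q)} {α : Fin m → Fin q} (hα : α ∈ C) :
    distC α C = 0 :=
  Nat.sInf_eq_zero.mpr (Or.inl ⟨α, hα, hammingDist_self α⟩)

lemma mem_cell_one {C : Set (Fin m → Fin q)} {ν β : Fin m → Fin q} (hν : ν ∉ C)
    (hβ : β ∈ C) (hd : hammingDist ν β = 1) : ν ∈ cell C 1 := by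
  have h1 : (1:ℕ) ∈ {d | ∃ β ∈ C, hammingDist ν β = d} := ⟨β, hβ, hd⟩
  have hle : sInf {d | ∃ β ∈ C, hammingDist ν β = d} ≤ 1 := Nat.sInf_le h1
  have hne : sInf {d | ∃ β ∈ C, hammingDist ν β = d} ≠ 0 := by
    intro h0
    rcases Nat.sInf_eq_zero.mp h0 with h | h
    · obtain ⟨β', hβ', hdist⟩ := h
      exact hν (hammingDist_eq_zero.mp hdist ▸ hβ')
    · rw [h] at h1; exact h1
  show distC ν C = 1
  unfold distC
  omega

lemma update_mem_or_cell {C : Set (Fin m → Fin q)} {β : Fin m → Fin q} (hβ : β ∈ C)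
    (i : Fin m) (b : Fin q) (hb : b ≠ β i) :
    Function.update β i b ∈ C ∨ Function.update β i b ∈ cell C 1 := by
  by_cases h : Function.update β i b ∈ C
  · exact Or.inl h
  · exact Or.inr (mem_cell_one h hβ
      (by rw [hammingDist_comm]; exact hammingDist_update β i b hb))

lemma sum_cnt (α : Fin m → Fin q) : ∑ a, cnt α a = m := by
  classical
  have h := Finset.card_eq_sum_card_fiberwise
    (f := α) (s := Finset.univ) (t := Finset.univ) (fun x _ => Finset.mem_univ (α x))
  simp only [Finset.card_univ, Fintype.card_fin] at h
  exact h.symm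

lemma exists_pos_of_cnt_pos {α : Fin m → Fin q} {a : Fin q} (h : 0 < cnt α a) :
    ∃ i, α i = a := by
  rw [cnt_def] at h
  obtain ⟨i, hi⟩ := Finset.card_pos.mp h
  exact ⟨i, (Finset.mem_filter.mp hi).2⟩

lemma cnt_apply_pos (α : Fin m → Fin q) (i : Fin m) : 0 < cnt α (α i) := by
  rw [cnt_def]
  exact Finset.card_pos.mpr ⟨i, by simp⟩

lemma cnt_eq_zero_of_forall_ne {α : Fin m → Fin q} {c : Fin q} (h : ∀ x, α x ≠ c) :
    cnt α c = 0 := by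
  rw [cnt_def, Finset.card_eq_zero, Finset.filter_eq_empty_iff]
  exact fun x _ => h x

lemma cnt_const_ne (a b : Fin q) (h : a ≠ b) : cnt (fun _ : Fin m => a) b = 0 :=
  cnt_eq_zero_of_forall_ne (fun _ => h)

lemma cnt_le_one_of_inj {α : Fin m → Fin q} (h : Function.Injective α) (a : Fin q) :
    cnt α a ≤ 1 := by
  rw [cnt_def]
  refine Finset.card_le_one.mpr ?_
  intro i hi j hj
  rw [Finset.mem_filter] at hi hj
  exact h (hi.2.trans hj.2.symm)

lemma inj_of_cnt_le_one {α : Fin m → Fin q} (h : ∀ a, cnt α a ≤ 1) :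
    Function.Injective α := by
  intro i j hij
  have ha := h (α j)
  rw [cnt_def] at ha
  have hi : i ∈ Finset.univ.filter fun x => α x = α j := by simp [hij]
  have hj : j ∈ Finset.univ.filter fun x => α x = α j := by simp
  exact Finset.card_le_one.mp ha i hi j hj

lemma inj_update_fresh {γ : Fin m → Fin q} (hγ : Function.Injective γ) {t : Fin q}
    (ht : ∀ x, γ x ≠ t) (i : Fin m) :
    Function.Injective (Function.update γ i t) := by
  intro x y hxy
  by_cases hx : x = i <;> by_cases hy : y = i
  · rw [hx, hy]
  · rw [hx, Function.update_self, Function.update_of_ne hy] at hxy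
    exact absurd hxy.symm (ht y)
  · rw [hy, Function.update_self, Function.update_of_ne hx] at hxy
    exact absurd hxy (ht x)
  · rw [Function.update_of_ne hx, Function.update_of_ne hy] at hxy
    exact hγ hxy

lemma exists_fresh {γ : Fin m → Fin q} (hmq : m < q) : ∃ c, ∀ x, γ x ≠ c := by
  by_contra h
  push_neg at h
  have hs : Function.Surjective γ := fun c => h c
  have := Fintype.card_le_of_surjective γ hs
  simp only [Fintype.card_fin] at this
  omega

lemma two_letters (hq2 : q = 2) (a b : Fin q) (hab : a ≠ b) (c : Fin q) :
    c = a ∨ c = b := by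
  have h1 : ({a, b} : Finset (Fin q)).card = 2 := by
    rw [Finset.card_insert_of_notMem (by simp [hab]), Finset.card_singleton]
  have h2 : ({a, b} : Finset (Fin q)) = Finset.univ :=
    Finset.eq_univ_of_card _ (by rw [h1, Fintype.card_fin, hq2])
  have hc : c ∈ ({a, b} : Finset (Fin q)) := by rw [h2]; exact Finset.mem_univ c
  simpa using hc

lemma cnt_swap_comp (α : Fin m → Fin q) (A B x : Fin q) :
    cnt (⇑(Equiv.swap A B) ∘ α) x = cnt α (Equiv.swap A B x) := by
  rw [cnt_def, cnt_def]
  congr 1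
  apply Finset.filter_congr
  intro i _
  simp only [Function.comp_apply]
  constructor
  · intro h; rw [← h, Equiv.swap_apply_self]
  · intro h; rw [h, Equiv.swap_apply_self]

lemma inj_connect {C : Set (Fin m → Fin q)} (hmq : m < q)
    (hcl : ∀ γ ∈ C, Function.Injective γ → ∀ (i : Fin m) (t : Fin q), t ≠ γ i →
        Function.Injective (Function.update γ i t) → Function.update γ i t ∈ C) :
    ∀ n : ℕ, ∀ γ ∈ C, Function.Injective γ → ∀ β : Fin m → Fin q,
      Function.Injective β → hammingDist γ β = n → β ∈ C := by
  intro n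
  induction n with
  | zero =>
    intro γ hγ _ β _ hd
    rwa [← hammingDist_eq_zero.mp hd]
  | succ n IH =>
    intro γ hγ hγi β hβi hd
    have hne : γ ≠ β := by
      intro e; rw [e, hammingDist_self] at hd; omega
    have hex : ∃ i, γ i ≠ β i := by
      by_contra h; push_neg at h; exact hne (funext h)
    obtain ⟨i, hi⟩ := hex
    by_cases hr : ∃ j, γ j = β i
    · obtain ⟨j, hj⟩ := hr
      have hji : j ≠ i := fun e => hi (e ▸ hj)
      have hγjβj : γ j ≠ β j := by
        rw [hj]; intro e; exact hji (hβi e).symm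
      obtain ⟨c, hc⟩ := exists_fresh (γ := γ) hmq
      by_cases hcβ : c = β j
      · have h1 : Function.Injective (Function.update γ j c) := inj_update_fresh hγi hc j
        have h2 : Function.update γ j c ∈ C := hcl γ hγ hγi j c (Ne.symm (hc j)) h1
        have h3 : hammingDist (Function.update γ j c) β = n := by
          rw [hcβ]
          have := hammingDist_update_toward γ β j hγjβj; omega
        exact IH _ h2 h1 β hβi h3
      · have h1 : Function.Injective (Function.update γ j c) := inj_update_fresh hγi hc j
        have h2 : Function.update γ j c ∈ C := hcl γ hγ hγi j c (Ne.symm (hc j)) h1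
        have hd' : hammingDist (Function.update γ j c) β = n + 1 := by
          rw [hammingDist_update_keep γ β j c hγjβj hcβ]; exact hd
        have hγ'i : Function.update γ j c i = γ i := Function.update_of_ne (Ne.symm hji) _ _
        have hfresh2 : ∀ x, Function.update γ j c x ≠ β i := by
          intro x
          rcases eq_or_ne x j with rfl | hxj
          · rw [Function.update_self]
            intro e; exact hc x (hj.trans e.symm)
          · rw [Function.update_of_ne hxj]
            intro e; exact hxj (hγi (e.trans hj.symm))
        have h1' : Function.Injective (Function.update (Function.update γ j c) i (β i)) :=
          inj_update_fresh h1 hfresh2 i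
        have h2' : Function.update (Function.update γ j c) i (β i) ∈ C :=
          hcl _ h2 h1 i (β i) (by rw [hγ'i]; exact Ne.symm hi) h1'
        have h3' : hammingDist (Function.update (Function.update γ j c) i (β i)) β = n := by
          have := hammingDist_update_toward (Function.update γ j c) β i (by rw [hγ'i]; exact hi)
          omega
        exact IH _ h2' h1' β hβi h3'
    · push_neg at hr
      have h1 : Function.Injective (Function.update γ i (β i)) := inj_update_fresh hγi hr i
      have h2 : Function.update γ i (β i) ∈ C := hcl γ hγ hγi i (β i) (Ne.symm hi) h1
      have h3 : hammingDist (Function.update γ i (β i)) β = n := by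
        have := hammingDist_update_toward γ β i hi; omega
      exact IH _ h2 h1 β hβi h3

lemma w_connect {C : Set (Fin m → Fin q)} (p : ℕ) (hp : 2 ≤ p)
    (huniv : ∀ A B : Fin q, A ≠ B → ∀ c, c = A ∨ c = B)
    (hcl : ∀ γ ∈ C, ∀ (i : Fin m) (t : Fin q), t ≠ γ i →
        (∃ a b, a ≠ b ∧ cnt (Function.update γ i t) a = p ∧
          cnt (Function.update γ i t) b = p - 1) →
        Function.update γ i t ∈ C)
    (hCW : ∀ γ ∈ C, ∃ a b, a ≠ b ∧ cnt γ a = p ∧ cnt γ b = p - 1) :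
    ∀ n : ℕ, ∀ γ ∈ C, ∀ β : Fin m → Fin q,
      (∃ a b, a ≠ b ∧ cnt β a = p ∧ cnt β b = p - 1) →
      hammingDist γ β = n → β ∈ C := by
  intro n
  induction n with
  | zero =>
    intro γ hγ β _ hd
    rwa [← hammingDist_eq_zero.mp hd]
  | succ n IH =>
    intro γ hγ β hβW hd
    obtain ⟨A, B, hAB, hA, hB⟩ := hCW γ hγ
    have hβle : ∀ c, cnt β c ≤ p := by
      obtain ⟨a', b', hab', ha', hb'⟩ := hβW
      intro c
      rcases huniv a' b' hab' c with rfl | rfl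
      · omega
      · omega
    have hmis : ∃ i, γ i ≠ β i ∧ γ i = A := by
      by_contra hcon
      push_neg at hcon
      have hsub : (Finset.univ.filter fun x => γ x = A)
            ∪ (Finset.univ.filter fun x => γ x ≠ β x)
          ⊆ Finset.univ.filter fun x => β x = A := by
        intro x hx
        rw [Finset.mem_union, Finset.mem_filter, Finset.mem_filter] at hx
        rw [Finset.mem_filter]
        refine ⟨Finset.mem_univ x, ?_⟩
        rcases hx with ⟨_, hxA⟩ | ⟨_, hxm⟩
        · by_cases hxe : γ x = β x
          · rw [← hxe]; exact hxA
          · exact absurd hxA (hcon x hxe)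
        · have hxB : γ x = B := by
            rcases huniv A B hAB (γ x) with h | h
            · exact absurd h (hcon x hxm)
            · exact h
          rcases huniv A B hAB (β x) with h | h
          · exact h
          · exact absurd (hxB.trans h.symm) hxm
      have hdisj : Disjoint (Finset.univ.filter fun x => γ x = A)
          (Finset.univ.filter fun x => γ x ≠ β x) := by
        rw [Finset.disjoint_left]
        intro x hx1 hx2
        rw [Finset.mem_filter] at hx1 hx2
        exact (hcon x hx2.2) hx1.2
      have hcard := Finset.card_le_card hsub
      rw [Finset.card_union_of_disjoint hdisj] at hcard
      rw [cnt_def] at hA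
      rw [hammingDist_def] at hd
      have e3 : (Finset.univ.filter fun x => β x = A).card ≤ p := by
        have := hβle A; rw [cnt_def] at this; exact this
      omega
    obtain ⟨i, him, hiA⟩ := hmis
    have hβiB : β i = B := by
      rcases huniv A B hAB (β i) with h | h
      · exact absurd (hiA.trans h.symm) him
      · exact h
    have hWγ' : ∃ a b, a ≠ b ∧ cnt (Function.update γ i (β i)) a = p ∧
        cnt (Function.update γ i (β i)) b = p - 1 := by
      refine ⟨B, A, Ne.symm hAB, ?_, ?_⟩
      · have h1 := cnt_update_target γ i (β i) (Ne.symm him)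
        rw [hβiB] at h1 ⊢
        omega
      · have h1 := cnt_update_self γ i (β i) (Ne.symm him)
        rw [hiA] at h1
        omega
    have hγ'C : Function.update γ i (β i) ∈ C := hcl γ hγ i (β i) (Ne.symm him) hWγ'
    have hd' : hammingDist (Function.update γ i (β i)) β = n := by
      have := hammingDist_update_toward γ β i him; omega
    exact IH _ hγ'C β hβW hd'

end AuxProof

/-- Theorem 1.2: a diagonally neighbour transitive code in `H(m,q)` is
either a frequency permutation array, or a single constant word `{(a,…,a)}`, or one of
`Rep(m,q)`, `Inj(m,q)` (with `m < q`), `W([m/2],2)` (with `q = 2`, `m ≥ 3` odd), none of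
which is a constant composition code. -/
theorem diag_neighbour_transitive_fpa {m q : ℕ} (hm : 2 ≤ m) (hq : 2 ≤ q)
    (C : Set (Fin m → Fin q))
    (hX : ∃ X : Subgroup (Equiv.Perm (Fin m → Fin q)), DiagNbrTransitive X C) :
    (∃ p : ℕ, 0 < p ∧ m = p * q ∧ ∀ β ∈ C, ∀ a : Fin q, cnt β a = p) ∨
    (∃ a : Fin q, C = {fun _ => a}) ∨
    ((C = repCode (Fin m) q ∨
      (m < q ∧ C = injCode (Fin m) q) ∨
      (q = 2 ∧ 3 ≤ m ∧ Odd m ∧ C = wCodeGen m q)) ∧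
     ¬ IsCCC C) := by
  classical
  obtain ⟨X, ⟨⟨hXaut, hCorb, hC1orb⟩, hXd⟩⟩ := hX
  obtain ⟨α, hαC⟩ := isOrbit_nonempty hCorb
  have hNC : ∀ β ∈ C, ∀ w, nwt β w = nwt α w :=
    fun β hβ w => nwt_const_on_orbit hXd hCorb hβ hαC w
  have hN1 : ∀ ν ∈ cell C 1, ∀ ν' ∈ cell C 1, ∀ w, nwt ν w = nwt ν' w :=
    fun ν hν ν' hν' w => nwt_const_on_orbit hXd hC1orb hν hν' w
  have hdich : ∀ (i : Fin m) (b : Fin q), b ≠ α i →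
      Function.update α i b ∈ C ∨ Function.update α i b ∈ cell C 1 :=
    fun i b hb => update_mem_or_cell hαC i b hb
  have hm0 : 0 < m := by omega
  have hm1lt : 1 < m := by omega
  obtain ⟨i0, i1, hi01⟩ : ∃ i0 i1 : Fin m, i0 ≠ i1 :=
    ⟨⟨0, hm0⟩, ⟨1, hm1lt⟩, Fin.ne_of_val_ne (by norm_num)⟩
  by_cases hconst : ∀ i, α i = α i0
  · -- Case: α is a constant word
    have hαeq : α = fun _ => α i0 := funext hconst
    have hCrep : ∀ β ∈ C, ∃ c : Fin q, β = fun _ => c := by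
      intro β hβ
      obtain ⟨x, hx, hxe⟩ := isOrbit_trans hCorb hαC hβ
      obtain ⟨⟨h, σ⟩, hpair⟩ := hXd hx
      refine ⟨h (α i0), ?_⟩
      rw [← hxe, ← hpair]
      funext i
      rw [diagLHom_apply, hconst (σ⁻¹ i)]
    by_cases hsing : ∀ β ∈ C, β = fun _ => α i0
    · refine Or.inr (Or.inl ⟨α i0, ?_⟩)
      exact Set.eq_singleton_iff_unique_mem.mpr ⟨hαeq ▸ hαC, hsing⟩
    · push_neg at hsing
      obtain ⟨β1, hβ1C, hβ1ne⟩ := hsing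
      obtain ⟨a1, ha1e⟩ := hCrep β1 hβ1C
      have ha1 : a1 ≠ α i0 := by
        intro e; exact hβ1ne (by rw [ha1e, e])
      have hconstmem : (fun _ : Fin m => α i0) ∈ C := hαeq ▸ hαC
      have ha1mem : (fun _ : Fin m => a1) ∈ C := ha1e ▸ hβ1C
      have hupd_notC : ∀ s : Fin q, s ≠ α i0 →
          Function.update (fun _ : Fin m => α i0) i0 s ∉ C := by
        intro s hs hmem
        obtain ⟨c, hc⟩ := hCrep _ hmem
        have e0 := congrFun hc i0
        have e1 := congrFun hc i1
        rw [Function.update_self] at e0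
        rw [Function.update_of_ne (Ne.symm hi01)] at e1
        exact hs (e0.trans e1.symm)
      have hrep : ∀ t : Fin q, (fun _ : Fin m => t) ∈ C := by
        intro t
        by_contra htC
        have hta : t ≠ α i0 := by
          intro e; exact htC (by rw [e]; exact hconstmem)
        have hν'cell : Function.update (fun _ : Fin m => α i0) i0 t ∈ cell C 1 :=
          (update_mem_or_cell hconstmem i0 t hta).resolve_left (hupd_notC t hta)
        have hνcell : Function.update (fun _ : Fin m => α i0) i0 a1 ∈ cell C 1 :=
          (update_mem_or_cell hconstmem i0 a1 ha1).resolve_left (hupd_notC a1 ha1)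
        obtain ⟨x, hxX, hxe⟩ := isOrbit_trans hC1orb hν'cell hνcell
        obtain ⟨⟨h, σ⟩, hpair⟩ := hXd hxX
        have hval : Function.update (fun _ : Fin m => α i0) i0 a1 (σ i0) = h t := by
          rw [← hxe, ← hpair, diagLHom_apply, Equiv.Perm.inv_apply_self,
            Function.update_self]
        have hcases : h t = a1 ∨ h t = α i0 := by
          rcases eq_or_ne (σ i0) i0 with he | he
          · left; rw [← hval, he, Function.update_self]
          · right; rw [← hval, Function.update_of_ne he]
        have hconstht : (fun _ : Fin m => h t) ∈ C := by
          rcases hcases with e | e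
          · rw [e]; exact ha1mem
          · rw [e]; exact hconstmem
        have hxt : x (fun _ : Fin m => t) = fun _ : Fin m => h t := by
          rw [← hpair]; funext i; rw [diagLHom_apply]
        have hmem2 : x⁻¹ (fun _ : Fin m => h t) ∈ C :=
          isOrbit_smul_mem hCorb hconstht (X.inv_mem hxX)
        rw [← hxt, Equiv.Perm.inv_apply_self] at hmem2
        exact htC hmem2
      refine Or.inr (Or.inr ⟨Or.inl ?_, ?_⟩)
      · ext β
        constructor
        · intro hβ; exact hCrep β hβ
        · rintro ⟨c, rfl⟩; exact hrep c
      · rintro ⟨-, f, hfpos, hf⟩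
        have h1 := hf _ hconstmem a1
        rw [cnt_const_ne _ _ (Ne.symm ha1)] at h1
        have := hfpos a1
        omega
  · -- Case: α is not constant
    push_neg at hconst
    obtain ⟨iw, hiw⟩ := hconst
    by_cases hflat : ∀ c d : Fin q, 0 < cnt α c → 0 < cnt α d → cnt α c = cnt α d
    · -- all positive counts are equal to p
      obtain ⟨p, hpdef⟩ : ∃ p, p = cnt α (α i0) := ⟨_, rfl⟩
      have hp0 : 0 < p := by rw [hpdef]; exact cnt_apply_pos α i0
      have hall : ∀ c, cnt α c = 0 ∨ cnt α c = p := by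
        intro c
        rcases Nat.eq_zero_or_pos (cnt α c) with h0 | hc
        · exact Or.inl h0
        · right; rw [hpdef]; exact hflat c (α i0) hc (cnt_apply_pos α i0)
      have hBne : α iw ≠ α i0 := hiw
      have hBp : cnt α (α iw) = p :=
        (hall (α iw)).resolve_left (by have := cnt_apply_pos α iw; omega)
      by_cases hz : ∃ z, cnt α z = 0
      · -- some letter is missing
        obtain ⟨z, hz0⟩ := hz
        have hzne : z ≠ α i0 := by
          intro e; rw [e, ← hpdef] at hz0; omega
        rcases Nat.lt_or_ge p 2 with hp1 | hp2
        · -- p = 1 : injection code case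
          have hp1' : p = 1 := by omega
          have hA1 : cnt α (α i0) = 1 := by omega
          have hB1 : cnt α (α iw) = 1 := by omega
          have hinjα : Function.Injective α := by
            apply inj_of_cnt_le_one
            intro c; rcases hall c with h | h <;> omega
          have hnm1 : nwt α 1 = m := by
            have hs := sum_cnt α
            have he : ∀ c ∈ (Finset.univ : Finset (Fin q)),
                cnt α c = if cnt α c = 1 then 1 else 0 := by
              intro c _
              rcases hall c with h | h
              · rw [h]; simp
              · rw [h, hp1']; simp
            rw [Finset.sum_congr rfl he, ← Finset.card_filter] at hs
            exact hs
          have hq_lt : m < q := by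
            have hdisj : Disjoint (Finset.univ.filter fun c : Fin q => cnt α c = 1)
                (Finset.univ.filter fun c : Fin q => cnt α c = 0) := by
              rw [Finset.disjoint_left]
              intro x h1 h0
              rw [Finset.mem_filter] at h1 h0
              omega
            have hcu := Finset.card_union_of_disjoint hdisj
            have hle := Finset.card_le_univ
              ((Finset.univ.filter fun c : Fin q => cnt α c = 1)
                ∪ (Finset.univ.filter fun c : Fin q => cnt α c = 0))
            rw [hcu] at hle
            simp only [Finset.card_univ, Fintype.card_fin] at hle
            have hz0mem : 0 < (Finset.univ.filter fun c : Fin q => cnt α c = 0).card :=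
              Finset.card_pos.mpr ⟨z, by simp [hz0]⟩
            have hnm1' : (Finset.univ.filter fun c : Fin q => cnt α c = 1).card = m := hnm1
            omega
          have e1 : nwt (Function.update α i0 (α iw)) 2 = nwt α 2 + 1 := by
            have H := nwt_update α i0 (α iw) hBne 2
            rw [hA1, hB1] at H
            split_ifs at H <;> first | exact (‹False›).elim | omega
          have hα2 : nwt α 2 = 0 := by
            unfold nwt
            rw [Finset.card_eq_zero, Finset.filter_eq_empty_iff]
            intro c _
            rcases hall c with h | h <;> omega
          have hν1 : Function.update α i0 (α iw) ∈ cell C 1 := by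
            rcases hdich i0 (α iw) hBne with h | h
            · exfalso; have := hNC _ h 2; omega
            · exact h
          have hnwt2inj : ∀ ν : Fin m → Fin q, Function.Injective ν → nwt ν 2 = 0 := by
            intro ν hν
            unfold nwt
            rw [Finset.card_eq_zero, Finset.filter_eq_empty_iff]
            intro c _
            have := cnt_le_one_of_inj hν c
            omega
          have hcl : ∀ γ ∈ C, Function.Injective γ → ∀ (i : Fin m) (t : Fin q), t ≠ γ i →
              Function.Injective (Function.update γ i t) → Function.update γ i t ∈ C := by
            intro γ hγ _ i t ht hinj
            rcases update_mem_or_cell hγ i t ht with h | h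
            · exact h
            · exfalso
              have hv := hN1 _ h _ hν1 2
              rw [hnwt2inj _ hinj, e1] at hv
              omega
          have hCinj : ∀ β ∈ C, Function.Injective β := by
            intro β hβ
            apply inj_of_cnt_le_one
            have h1 : nwt β 1 = m := (hNC β hβ 1).trans hnm1
            have hsum : ∑ a, cnt β a = m := sum_cnt β
            have hle : ∀ a ∈ (Finset.univ : Finset (Fin q)),
                (if cnt β a = 1 then (1:ℕ) else 0) ≤ cnt β a := by
              intro a _; split_ifs with h <;> omega
            have hsum2 : ∑ a, (if cnt β a = 1 then (1:ℕ) else 0) = m := by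
              rw [← Finset.card_filter]
              exact h1
            have hpt := (Finset.sum_eq_sum_iff_of_le hle).mp (by rw [hsum2, hsum])
            intro a
            have := hpt a (Finset.mem_univ a)
            split_ifs at this <;> omega
          refine Or.inr (Or.inr ⟨Or.inr (Or.inl ⟨hq_lt, ?_⟩), ?_⟩)
          · ext β
            constructor
            · intro hβ; exact hCinj β hβ
            · intro hβ
              exact inj_connect hq_lt hcl (hammingDist α β) α hαC hinjα β hβ rfl
          · rintro ⟨-, f, hfpos, hf⟩
            obtain ⟨L, hL⟩ := exists_fresh (γ := α) hq_lt
            have h1 := hf α hαC L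
            rw [cnt_eq_zero_of_forall_ne hL] at h1
            have := hfpos L
            omega
        · -- p ≥ 2 : contradiction
          exfalso
          have e1 : nwt (Function.update α i0 (α iw)) (p+1) = nwt α (p+1) + 1 := by
            have H := nwt_update α i0 (α iw) hBne (p+1)
            rw [← hpdef, hBp] at H
            split_ifs at H <;> first | exact (‹False›).elim | omega
          have hν1 : Function.update α i0 (α iw) ∈ cell C 1 := by
            rcases hdich i0 (α iw) hBne with h | h
            · exfalso; have := hNC _ h (p+1); omega
            · exact h
          have e2 : nwt (Function.update α i0 z) (p+1) = nwt α (p+1) := by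
            have H := nwt_update α i0 z hzne (p+1)
            rw [← hpdef, hz0] at H
            split_ifs at H <;> first | exact (‹False›).elim | omega
          have e3 : nwt (Function.update α i0 z) (p-1) ≠ nwt α (p-1) := by
            have H := nwt_update α i0 z hzne (p-1)
            rw [← hpdef, hz0] at H
            split_ifs at H <;> first | exact (‹False›).elim | omega
          have hν2 : Function.update α i0 z ∈ cell C 1 := by
            rcases hdich i0 z hzne with h | h
            · exact absurd (hNC _ h (p-1)) e3
            · exact h
          have := hN1 _ hν1 _ hν2 (p+1)
          omega
      · -- no letter missing: frequency permutation array
        push_neg at hz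
        have hallp : ∀ c, cnt α c = p := fun c => (hall c).resolve_left (hz c)
        refine Or.inl ⟨p, hp0, ?_, ?_⟩
        · have hs := sum_cnt α
          rw [Finset.sum_congr rfl fun c _ => hallp c] at hs
          rw [Finset.sum_const, Finset.card_univ, Fintype.card_fin, smul_eq_mul] at hs
          rw [← hs]
          exact Nat.mul_comm q p
        · intro β hβ c
          have h1 : nwt β p = q := by
            rw [hNC β hβ p]
            unfold nwt
            rw [show (Finset.univ.filter fun a : Fin q => cnt α a = p) = Finset.univ from
              Finset.filter_true_of_mem fun c _ => hallp c]
            rw [Finset.card_univ, Fintype.card_fin]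
          have h2 : (Finset.univ.filter fun a : Fin q => cnt β a = p) = Finset.univ :=
            Finset.eq_univ_of_card _ (by rw [Fintype.card_fin]; exact h1)
          have hc : c ∈ Finset.univ.filter fun a : Fin q => cnt β a = p := by
            rw [h2]; exact Finset.mem_univ c
          exact (Finset.mem_filter.mp hc).2
    · -- two distinct positive counts: W code case
      push_neg at hflat
      obtain ⟨c0, d0, hc0, hd0, hne0⟩ := hflat
      have step1 : ∀ c d : Fin q, 0 < cnt α c → 0 < cnt α d → cnt α c ≤ cnt α d + 1 := by
        intro c d hc hd
        by_contra hgt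
        push_neg at hgt
        have hcd : c ≠ d := by intro e; rw [e] at hgt; omega
        obtain ⟨i, hi⟩ := exists_pos_of_cnt_pos hc
        obtain ⟨j, hj⟩ := exists_pos_of_cnt_pos hd
        have hd_ne : d ≠ α i := by rw [hi]; exact Ne.symm hcd
        have hc_ne : c ≠ α j := by rw [hj]; exact hcd
        have e1 : nwt (Function.update α i d) (cnt α c) + 1 = nwt α (cnt α c) := by
          have H := nwt_update α i d hd_ne (cnt α c)
          rw [hi] at H
          split_ifs at H <;> first | exact (‹False›).elim | omega
        have hν1 : Function.update α i d ∈ cell C 1 := by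
          rcases hdich i d hd_ne with h | h
          · exfalso; have := hNC _ h (cnt α c); omega
          · exact h
        have e2 : nwt (Function.update α j c) (cnt α c) + 1 = nwt α (cnt α c) := by
          have H := nwt_update α j c hc_ne (cnt α c)
          rw [hj] at H
          split_ifs at H <;> first | exact (‹False›).elim | omega
        have hν2 : Function.update α j c ∈ cell C 1 := by
          rcases hdich j c hc_ne with h | h
          · exfalso; have := hNC _ h (cnt α c); omega
          · exact h
        have e3 : nwt (Function.update α i d) (cnt α c + 1) = nwt α (cnt α c + 1) := by
          have H := nwt_update α i d hd_ne (cnt α c + 1)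
          rw [hi] at H
          split_ifs at H <;> first | exact (‹False›).elim | omega
        have e4 : nwt (Function.update α j c) (cnt α c + 1) = nwt α (cnt α c + 1) + 1 := by
          have H := nwt_update α j c hc_ne (cnt α c + 1)
          rw [hj] at H
          split_ifs at H <;> first | exact (‹False›).elim | omega
        have := hN1 _ hν1 _ hν2 (cnt α c + 1)
        omega
      have hpairx : ∃ A B : Fin q, 0 < cnt α B ∧ cnt α A = cnt α B + 1 := by
        have h1 := step1 c0 d0 hc0 hd0
        have h2 := step1 d0 c0 hd0 hc0
        rcases Nat.lt_or_ge (cnt α c0) (cnt α d0) with h | h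
        · exact ⟨d0, c0, hc0, by omega⟩
        · exact ⟨c0, d0, hd0, by omega⟩
      obtain ⟨A, B, hBpos, hAB1⟩ := hpairx
      obtain ⟨p, hpdef⟩ : ∃ p, p = cnt α A := ⟨_, rfl⟩
      have hBp : cnt α B = p - 1 := by omega
      have hp2 : 2 ≤ p := by omega
      have hABne : A ≠ B := by intro e; rw [e] at hAB1; omega
      have hall : ∀ c, cnt α c = 0 ∨ cnt α c = p ∨ cnt α c = p - 1 := by
        intro c
        rcases Nat.eq_zero_or_pos (cnt α c) with h0 | hcpos
        · exact Or.inl h0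
        · right
          have g1 := step1 c A hcpos (by omega)
          have g2 := step1 A c (by omega) hcpos
          have g3 := step1 c B hcpos hBpos
          have g4 := step1 B c hBpos hcpos
          omega
      obtain ⟨iA, hiA⟩ := exists_pos_of_cnt_pos (a := A) (α := α) (by omega)
      obtain ⟨iB, hiB⟩ := exists_pos_of_cnt_pos (a := B) (α := α) (by omega)
      have hAneB' : A ≠ α iB := by rw [hiB]; exact hABne
      have hα_p1 : nwt α (p+1) = 0 := by
        unfold nwt
        rw [Finset.card_eq_zero, Finset.filter_eq_empty_iff]
        intro c _
        rcases hall c with h | h | h <;> omega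
      have eB : nwt (Function.update α iB A) (p+1) = nwt α (p+1) + 1 := by
        have H := nwt_update α iB A hAneB' (p+1)
        rw [hiB, hBp, ← hpdef] at H
        split_ifs at H <;> first | exact (‹False›).elim | omega
      have hνB : Function.update α iB A ∈ cell C 1 := by
        rcases hdich iB A hAneB' with h | h
        · exfalso; have := hNC _ h (p+1); omega
        · exact h
      have hC1p1 : ∀ ν ∈ cell C 1, nwt ν (p+1) = 1 := by
        intro ν hν
        have := hN1 _ hν _ hνB (p+1)
        omega
      have eBb : nwt (Function.update α iB A) (p-2) = nwt α (p-2) + 1 := by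
        have H := nwt_update α iB A hAneB' (p-2)
        rw [hiB, hBp, ← hpdef] at H
        split_ifs at H <;> first | exact (‹False›).elim | omega
      have hNp1 : nwt α p = 1 := by
        have hpos : 0 < nwt α p := by
          unfold nwt
          refine Finset.card_pos.mpr ⟨A, ?_⟩
          simp only [Finset.mem_filter, Finset.mem_univ, true_and]
          omega
        by_contra hne2
        have h2 : 2 ≤ nwt α p := by omega
        have hex : ∃ A', A' ≠ A ∧ cnt α A' = p := by
          obtain ⟨x, hx, y, hy, hxy⟩ := Finset.one_lt_card.mp
            (show 1 < (Finset.univ.filter fun x : Fin q => cnt α x = p).card from h2)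
          rw [Finset.mem_filter] at hx hy
          rcases eq_or_ne x A with rfl | hxA
          · exact ⟨y, Ne.symm hxy, hy.2⟩
          · exact ⟨x, hxA, hx.2⟩
        obtain ⟨A', hA'ne, hA'p⟩ := hex
        have hA'neαiA : A' ≠ α iA := by rw [hiA]; exact hA'ne
        have e3a : nwt (Function.update α iA A') (p+1) = nwt α (p+1) + 1 := by
          have H := nwt_update α iA A' hA'neαiA (p+1)
          rw [hiA, hA'p, ← hpdef] at H
          split_ifs at H <;> first | exact (‹False›).elim | omega
        have hν3 : Function.update α iA A' ∈ cell C 1 := by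
          rcases hdich iA A' hA'neαiA with h | h
          · exfalso; have := hNC _ h (p+1); omega
          · exact h
        have e3b : nwt (Function.update α iA A') (p-2) = nwt α (p-2) := by
          have H := nwt_update α iA A' hA'neαiA (p-2)
          rw [hiA, hA'p, ← hpdef] at H
          split_ifs at H <;> first | exact (‹False›).elim | omega
        have := hN1 _ hν3 _ hνB (p-2)
        omega
      have hNpm1 : nwt α (p-1) = 1 := by
        have hpos : 0 < nwt α (p-1) := by
          unfold nwt
          refine Finset.card_pos.mpr ⟨B, ?_⟩
          simp only [Finset.mem_filter, Finset.mem_univ, true_and]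
          omega
        by_contra hne2
        have h2 : 2 ≤ nwt α (p-1) := by omega
        have hex : ∃ B', B' ≠ B ∧ cnt α B' = p - 1 := by
          obtain ⟨x, hx, y, hy, hxy⟩ := Finset.one_lt_card.mp
            (show 1 < (Finset.univ.filter fun x : Fin q => cnt α x = p - 1).card from h2)
          rw [Finset.mem_filter] at hx hy
          rcases eq_or_ne x B with rfl | hxB
          · exact ⟨y, Ne.symm hxy, hy.2⟩
          · exact ⟨x, hxB, hx.2⟩
        obtain ⟨B', hB'ne, hB'p⟩ := hex
        have hB'neαiB : B' ≠ α iB := by rw [hiB]; exact hB'ne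
        have e4a : nwt (Function.update α iB B') (p-2) = nwt α (p-2) + 1 := by
          have H := nwt_update α iB B' hB'neαiB (p-2)
          rw [hiB, hBp, hB'p] at H
          split_ifs at H <;> first | exact (‹False›).elim | omega
        have hν4 : Function.update α iB B' ∈ cell C 1 := by
          rcases hdich iB B' hB'neαiB with h | h
          · exfalso; have := hNC _ h (p-2); omega
          · exact h
        have e4b : nwt (Function.update α iB B') (p+1) = nwt α (p+1) := by
          have H := nwt_update α iB B' hB'neαiB (p+1)
          rw [hiB, hBp, hB'p] at H
          split_ifs at H <;> first | exact (‹False›).elim | omega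
        have := hC1p1 _ hν4
        omega
      have hNz : ∀ c, cnt α c ≠ 0 := by
        intro z hz0
        have hzneA : z ≠ α iA := by
          intro e; rw [e, hiA] at hz0; omega
        have eZ0 : nwt (Function.update α iA z) 0 ≠ nwt α 0 := by
          have H := nwt_update α iA z hzneA 0
          rw [hiA, ← hpdef, hz0] at H
          split_ifs at H <;> first | exact (‹False›).elim | omega
        have hνZ : Function.update α iA z ∈ cell C 1 := by
          rcases hdich iA z hzneA with h | h
          · exact absurd (hNC _ h 0) eZ0
          · exact h
        have eZ1 : nwt (Function.update α iA z) (p+1) = nwt α (p+1) := by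
          have H := nwt_update α iA z hzneA (p+1)
          rw [hiA, ← hpdef, hz0] at H
          split_ifs at H <;> first | exact (‹False›).elim | omega
        have := hC1p1 _ hνZ
        omega
      have hcA : ∀ c, cnt α c = p → c = A := by
        intro c hcp
        have h1 : c ∈ Finset.univ.filter fun x : Fin q => cnt α x = p := by
          simp only [Finset.mem_filter, Finset.mem_univ, true_and]; exact hcp
        have h2 : A ∈ Finset.univ.filter fun x : Fin q => cnt α x = p := by
          simp only [Finset.mem_filter, Finset.mem_univ, true_and]; omega
        exact Finset.card_le_one.mp (le_of_eq hNp1) c h1 A h2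
      have hcB : ∀ c, cnt α c = p - 1 → c = B := by
        intro c hcp
        have h1 : c ∈ Finset.univ.filter fun x : Fin q => cnt α x = p - 1 := by
          simp only [Finset.mem_filter, Finset.mem_univ, true_and]; exact hcp
        have h2 : B ∈ Finset.univ.filter fun x : Fin q => cnt α x = p - 1 := by
          simp only [Finset.mem_filter, Finset.mem_univ, true_and]; omega
        exact Finset.card_le_one.mp (le_of_eq hNpm1) c h1 B h2
      have hletters : ∀ c : Fin q, c = A ∨ c = B := by
        intro c
        rcases hall c with h | h | h
        · exact absurd h (hNz c)
        · exact Or.inl (hcA c h)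
        · exact Or.inr (hcB c h)
      have huniv2 : (Finset.univ : Finset (Fin q)) = {A, B} := by
        symm
        apply Finset.eq_univ_iff_forall.mpr
        intro c
        rcases hletters c with rfl | rfl
        · exact Finset.mem_insert_self _ _
        · exact Finset.mem_insert_of_mem (Finset.mem_singleton_self _)
      have hq2 : q = 2 := by
        have hcard : Fintype.card (Fin q) = ({A, B} : Finset (Fin q)).card := by
          rw [← huniv2, Finset.card_univ]
        rw [Fintype.card_fin, Finset.card_insert_of_notMem (by simp [hABne]),
          Finset.card_singleton] at hcard
        exact hcard
      have hm2p : m = 2 * p - 1 := by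
        have hs := sum_cnt α
        rw [show (Finset.univ : Finset (Fin q)) = {A, B} from huniv2,
          Finset.sum_pair hABne] at hs
        omega
      have hCW : ∀ γ ∈ C, ∃ a b : Fin q, a ≠ b ∧ cnt γ a = p ∧ cnt γ b = p - 1 := by
        intro γ hγ
        have h1 : nwt γ p = 1 := (hNC γ hγ p).trans hNp1
        have h2 : nwt γ (p-1) = 1 := (hNC γ hγ (p-1)).trans hNpm1
        unfold nwt at h1 h2
        obtain ⟨a', ha'⟩ := Finset.card_pos.mp
          (show 0 < (Finset.univ.filter fun x : Fin q => cnt γ x = p).card by omega)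
        obtain ⟨b', hb'⟩ := Finset.card_pos.mp
          (show 0 < (Finset.univ.filter fun x : Fin q => cnt γ x = p - 1).card by omega)
        rw [Finset.mem_filter] at ha' hb'
        refine ⟨a', b', ?_, ha'.2, hb'.2⟩
        intro e
        rw [e] at ha'
        have h3 := ha'.2
        have h4 := hb'.2
        omega
      have hcl : ∀ γ ∈ C, ∀ (i : Fin m) (t : Fin q), t ≠ γ i →
          (∃ a b, a ≠ b ∧ cnt (Function.update γ i t) a = p ∧
            cnt (Function.update γ i t) b = p - 1) →
          Function.update γ i t ∈ C := by
        intro γ hγ i t ht hW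
        rcases update_mem_or_cell hγ i t ht with h | h
        · exact h
        · exfalso
          have hv := hC1p1 _ h
          obtain ⟨a', b', hab', ha', hb'⟩ := hW
          have hzero : nwt (Function.update γ i t) (p+1) = 0 := by
            unfold nwt
            rw [Finset.card_eq_zero, Finset.filter_eq_empty_iff]
            intro c _
            rcases two_letters hq2 a' b' hab' c with rfl | rfl <;> omega
          omega
      have hCeq : C = wCodeGen m q := by
        apply Set.Subset.antisymm
        · intro γ hγ
          obtain ⟨a', b', hab', ha', hb'⟩ := hCW γ hγ
          refine ⟨a', b', hab', ?_, ?_⟩ <;> omega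
        · intro β hβ
          obtain ⟨a', b', hab', ha', hb'⟩ := hβ
          have hWβ : ∃ a b : Fin q, a ≠ b ∧ cnt β a = p ∧ cnt β b = p - 1 :=
            ⟨a', b', hab', by omega, by omega⟩
          exact w_connect p hp2 (two_letters hq2) hcl hCW (hammingDist α β) α hαC β hWβ rfl
      refine Or.inr (Or.inr ⟨Or.inr (Or.inr ⟨hq2, by omega, ⟨p - 1, by omega⟩, hCeq⟩), ?_⟩)
      rintro ⟨-, f, hfpos, hf⟩
      have hs1 : cnt (⇑(Equiv.swap A B) ∘ α) A = cnt α B := by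
        rw [cnt_swap_comp, Equiv.swap_apply_left]
      have hs2 : cnt (⇑(Equiv.swap A B) ∘ α) B = cnt α A := by
        rw [cnt_swap_comp, Equiv.swap_apply_right]
      have hswapmem : (⇑(Equiv.swap A B) ∘ α) ∈ C := by
        rw [hCeq]
        exact ⟨B, A, Ne.symm hABne, by omega, by omega⟩
      have h1 := hf α hαC A
      have h2 := hf _ hswapmem A
      rw [hs1] at h2
      omega
end

section
/- Let q ≥ 2 and let T be a subset of S_q, with C(T) = {α(t) : t ∈ T} the permutation code generated by T in H(q,q). Then C(T) is 1-regular with minimum distance δ = 2 if and only if T = S_q. -/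
open Equiv Pointwise

section AuxLemmas

open Equiv

variable {q : ℕ}

lemma hd_eq_one_iff {x y : Fin q → Fin q} :
    hammingDist x y = 1 ↔ ∃ a, x a ≠ y a ∧ ∀ i, i ≠ a → x i = y i := by
  unfold hammingDist
  rw [Finset.card_eq_one]
  constructor
  · rintro ⟨a, ha⟩
    have hmem : ∀ i, (i ∈ ({i | x i ≠ y i} : Finset (Fin q))) ↔ i = a := by
      intro i; rw [ha]; simp
    refine ⟨a, ?_, ?_⟩
    · have := (hmem a).mpr rfl
      simpa using this
    · intro i hi
      by_contra h
      exact hi ((hmem i).mp (by simpa using h))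
  · rintro ⟨a, ha, h⟩
    refine ⟨a, ?_⟩
    ext i
    simp only [Finset.mem_filter, Finset.mem_univ, true_and, Finset.mem_singleton]
    constructor
    · intro hi; by_contra hia; exact hi (h i hia)
    · rintro rfl; simpa using ha

lemma inj_agree {f g : Fin q → Fin q} (hf : Function.Injective f)
    (hg : Function.Injective g) (a : Fin q) (h : ∀ i, i ≠ a → f i = g i) : f = g := by
  have hgs : Function.Surjective g := Finite.surjective_of_injective hg
  obtain ⟨j, hj⟩ := hgs (f a)
  have hja : j = a := by
    by_contra hja
    have h1 : f j = g j := h j hja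
    have : f j = f a := by rw [h1, hj]
    exact hja (hf this)
  funext i
  by_cases hi : i = a
  · subst hi; rw [← hj, hja]
  · exact h i hi

lemma two_le_dist {f g : Fin q → Fin q} (hf : Function.Injective f)
    (hg : Function.Injective g) (hne : f ≠ g) : 2 ≤ hammingDist f g := by
  rcases Nat.lt_or_ge (hammingDist f g) 2 with h | h
  · interval_cases hd : hammingDist f g
    · exact absurd (hammingDist_eq_zero.mp hd) hne
    · obtain ⟨a, ha, h2⟩ := hd_eq_one_iff.mp hd
      exact absurd (inj_agree hf hg a h2) hne
  · exact h

lemma hd_update_right {t : Fin q → Fin q} {a b : Fin q} (hb : b ≠ t a) :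
    hammingDist (Function.update t a b) t = 1 := by
  rw [hd_eq_one_iff]
  exact ⟨a, by simpa using hb, fun i hi => by simp [Function.update_apply, hi]⟩

lemma hd_update_swap {t : Equiv.Perm (Fin q)} {a b : Fin q} (hb : b ≠ t a) :
    hammingDist (Function.update (⇑t) a b) (⇑(Equiv.swap b (t a) * t)) = 1 := by
  rw [hd_eq_one_iff]
  have hca : t.symm b ≠ a := fun hc => hb (by rw [← hc]; simp)
  refine ⟨t.symm b, ?_, ?_⟩
  · rw [Function.update_apply, if_neg hca]
    simp only [Equiv.Perm.mul_apply, Equiv.apply_symm_apply, Equiv.swap_apply_left]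
    exact hb
  · intro i hi
    simp only [Equiv.Perm.mul_apply]
    by_cases hia : i = a
    · subst hia
      rw [Function.update_apply, if_pos rfl, Equiv.swap_apply_right]
    · rw [Function.update_apply, if_neg hia]
      refine (Equiv.swap_apply_of_ne_of_ne ?_ ?_).symm
      · intro hc
        exact hi (by rw [← hc]; simp)
      · exact fun hc => hia (t.injective hc)

lemma exists_perm_two {α : Type*} [DecidableEq α] {x1 x2 y1 y2 : α}
    (hx : x1 ≠ x2) (hy : y1 ≠ y2) :
    ∃ g : Equiv.Perm α, g x1 = y1 ∧ g x2 = y2 := by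
  refine ⟨(Equiv.swap x1 y1).trans (Equiv.swap ((Equiv.swap x1 y1) x2) y2), ?_, ?_⟩
  · simp only [Equiv.trans_apply, Equiv.swap_apply_left]
    apply Equiv.swap_apply_of_ne_of_ne
    · intro h
      exact hx
        (((Equiv.swap x1 y1).injective (h.symm.trans (Equiv.swap_apply_left x1 y1).symm)).symm)
    · exact hy
  · simp [Equiv.trans_apply, Equiv.swap_apply_left]

/-- Any permutation at Hamming distance 1 from `update t a b` is `t` or `swap b (t a) * t`. -/
lemma near_perm {t h : Equiv.Perm (Fin q)} {a b : Fin q} (hb : b ≠ t a)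
    (hd : hammingDist (Function.update (⇑t) a b) (⇑h) = 1) :
    h = t ∨ h = Equiv.swap b (t a) * t := by
  set γ : Fin q → Fin q := Function.update (⇑t) a b with hγ
  obtain ⟨j, hj1, hj2⟩ := hd_eq_one_iff.mp hd
  by_cases hja : j = a
  · left
    subst hja
    have : ⇑t = ⇑h := by
      apply inj_agree t.injective h.injective j
      intro i hi
      have := hj2 i hi
      rwa [hγ, Function.update_apply, if_neg hi] at this
    exact Equiv.coe_fn_injective this.symm ▸ rfl
  · right
    have hha : h a = b := by
      have := hj2 a (fun hc => hja hc.symm)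
      rw [hγ, Function.update_apply, if_pos rfl] at this
      exact this.symm
    set c := t.symm b with hc
    have htc : t c = b := by simp [hc]
    have hca : c ≠ a := fun hc' => hb (hc' ▸ htc).symm
    have hjc : j = c := by
      by_contra hjc
      have h1 := hj2 c (fun hc' => hjc hc'.symm)
      rw [hγ, Function.update_apply, if_neg hca, htc] at h1
      exact hca (h.injective (h1.symm.trans hha.symm))
    have htj : (⇑t) j = b := by rw [hjc]; exact htc
    have hhj : h j ≠ b := by
      intro hcon
      rw [hγ, Function.update_apply, if_neg hja, htj] at hj1
      exact hj1 hcon.symm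
    have hhjta : h j = t a := by
      obtain ⟨m, hm⟩ := t.surjective (h j)
      by_cases hma : m = a
      · rw [← hm, hma]
      · by_cases hmj : m = j
        · exfalso; subst hmj; rw [hm] at htj; exact hhj htj
        · exfalso
          have := hj2 m hmj
          rw [hγ, Function.update_apply, if_neg hma] at this
          exact hmj (h.injective (this.symm.trans hm))
    apply Equiv.ext
    intro i
    simp only [Equiv.Perm.mul_apply]
    by_cases hia : i = a
    · subst hia; rw [hha, Equiv.swap_apply_right]
    · by_cases hij : i = j
      · subst hij; rw [hhjta, htj, Equiv.swap_apply_left]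
      · have hti : (⇑t) i = h i := by
          have := hj2 i hij
          rwa [hγ, Function.update_apply, if_neg hia] at this
        rw [← hti]
        refine (Equiv.swap_apply_of_ne_of_ne ?_ ?_).symm
        · intro hcon
          have : h i = h a := by rw [← hti, hcon, hha]
          exact hia (h.injective this)
        · exact fun hcon => hia (t.injective hcon)

lemma distC_eq_zero_iff {C : Set (Fin q → Fin q)} (hC : C.Nonempty) (γ : Fin q → Fin q) :
    distC γ C = 0 ↔ γ ∈ C := by
  unfold distC
  rw [Nat.sInf_eq_zero]
  constructor
  · rintro (⟨β, hβ, hd⟩ | he)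
    · rwa [hammingDist_eq_zero.mp hd]
    · exfalso
      obtain ⟨β, hβ⟩ := hC
      exact (Set.eq_empty_iff_forall_notMem.mp he _) ⟨β, hβ, rfl⟩
  · intro h
    exact Or.inl ⟨γ, h, hammingDist_self γ⟩

lemma distC_eq_one {C : Set (Fin q → Fin q)} {γ : Fin q → Fin q}
    (h0 : γ ∉ C) (h1 : ∃ β ∈ C, hammingDist γ β = 1) : distC γ C = 1 := by
  have hle : distC γ C ≤ 1 := Nat.sInf_le h1
  have hmem := Nat.sInf_mem (⟨1, h1⟩ : {d | ∃ β ∈ C, hammingDist γ β = d}.Nonempty)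
  obtain ⟨β, hβ, hd⟩ := hmem
  have : distC γ C ≠ 0 := by
    intro h
    rw [show sInf {d | ∃ β ∈ C, hammingDist γ β = d} = distC γ C from rfl, h] at hd
    exact h0 (hammingDist_eq_zero.mp hd ▸ hβ)
  omega

lemma distC_eq_one_elim {C : Set (Fin q → Fin q)} {γ : Fin q → Fin q}
    (h : distC γ C = 1) : γ ∉ C ∧ ∃ β ∈ C, hammingDist γ β = 1 := by
  have hne : {d | ∃ β ∈ C, hammingDist γ β = d}.Nonempty := by
    by_contra he
    rw [Set.not_nonempty_iff_eq_empty] at he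
    rw [distC, he] at h
    simp at h
  have hmem := Nat.sInf_mem hne
  rw [show sInf {d | ∃ β ∈ C, hammingDist γ β = d} = distC γ C from rfl, h] at hmem
  refine ⟨?_, hmem⟩
  intro hγ
  have : distC γ C ≤ 0 := Nat.sInf_le ⟨γ, hγ, hammingDist_self γ⟩
  omega

lemma count_eq {k : ℕ} {γ γ' : Fin q → Fin q} (g σ : Equiv.Perm (Fin q))
    (h : ∀ i, γ' i = g (γ (σ i))) :
    {β ∈ {f : Fin q → Fin q | Function.Bijective f} | hammingDist γ β = k}.ncard
      = {β ∈ {f : Fin q → Fin q | Function.Bijective f} | hammingDist γ' β = k}.ncard := by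
  set F : (Fin q → Fin q) → (Fin q → Fin q) := fun β i => g (β (σ i)) with hF
  have hFinj : Function.Injective F := by
    intro β β' hββ'
    funext j
    have := congrFun hββ' (σ.symm j)
    simp only [hF, Equiv.apply_symm_apply] at this
    exact g.injective this
  have key : ∀ x y : Fin q → Fin q, hammingDist (F x) (F y) = hammingDist x y := by
    intro x y
    unfold hammingDist
    apply Finset.card_bij (fun i _ => σ i)
    · intro i hi
      simp only [Finset.mem_filter, Finset.mem_univ, true_and, hF] at hi ⊢
      exact fun hc => hi (by rw [hc])
    · intro i _ j _ hij
      exact σ.injective hij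
    · intro j hj
      refine ⟨σ.symm j, ?_, by simp⟩
      simp only [Finset.mem_filter, Finset.mem_univ, true_and, hF, Equiv.apply_symm_apply] at hj ⊢
      exact fun hc => hj (g.injective hc)
  have himg : {β ∈ {f : Fin q → Fin q | Function.Bijective f} | hammingDist γ' β = k}
      = F '' {β ∈ {f : Fin q → Fin q | Function.Bijective f} | hammingDist γ β = k} := by
    have hγ' : γ' = F γ := funext h
    ext f
    simp only [Set.mem_image, Set.mem_setOf_eq, Set.mem_sep_iff]
    constructor
    · rintro ⟨hfb, hd⟩
      refine ⟨fun i => g.symm (f (σ.symm i)), ⟨?_, ?_⟩, ?_⟩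
      · exact (g.symm.bijective.comp hfb).comp σ.symm.bijective
      · have hFf : F (fun i => g.symm (f (σ.symm i))) = f := by
          funext i; simp [hF]
        rw [← key]
        rw [← hγ', hFf]
        exact hd
      · funext i; simp [hF]
    · rintro ⟨β, ⟨hβb, hd⟩, rfl⟩
      refine ⟨(g.bijective.comp hβb).comp σ.bijective, ?_⟩
      rw [hγ', key]
      exact hd
  rw [himg, Set.ncard_image_of_injective _ hFinj]

lemma permCode_univ : permCode (Set.univ : Set (Equiv.Perm (Fin q)))
    = {f : Fin q → Fin q | Function.Bijective f} := by
  ext f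
  constructor
  · rintro ⟨g, -, rfl⟩
    exact g.bijective
  · intro hf
    exact ⟨Equiv.ofBijective f hf, Set.mem_univ _, rfl⟩

end AuxLemmas

/-- Lemma 5.2: for `T ⊆ S_q`, the permutation code `C(T)` is
`1`-regular with minimum distance `2` if and only if `T = S_q`. -/
theorem one_regular_permutation_code (q : ℕ) (hq : 2 ≤ q) (T : Set (Equiv.Perm (Fin q))) :
    (RegularUpTo (permCode T) 1 ∧ minDist (permCode T) = 2) ↔ T = Set.univ := by
  constructor
  · rintro ⟨hreg, hmin⟩
    set C := permCode T with hCdef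
    have hCinj : ∀ β ∈ C, Function.Injective β := by
      rintro β ⟨s, hs, rfl⟩
      exact s.injective
    have hS : {d | ∃ β ∈ C, ∃ γ ∈ C, β ≠ γ ∧ hammingDist β γ = d}.Nonempty := by
      by_contra he
      rw [Set.not_nonempty_iff_eq_empty] at he
      rw [minDist, he] at hmin
      simp at hmin
    have h2mem : (2:ℕ) ∈ {d | ∃ β ∈ C, ∃ γ ∈ C, β ≠ γ ∧ hammingDist β γ = d} := by
      rw [← hmin]
      exact Nat.sInf_mem hS
    obtain ⟨β, hβ, γc, hγc, hne, hd2⟩ := h2mem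
    obtain ⟨t, htT, rfl⟩ := hβ
    obtain ⟨t', ht'T, rfl⟩ := hγc
    have htt' : t ≠ t' := fun hc => hne (by rw [hc])
    unfold hammingDist at hd2
    obtain ⟨a₁, a₂, ha12, hset⟩ := Finset.card_eq_two.mp hd2
    have hmemiff : ∀ i, (⇑t) i ≠ (⇑t') i ↔ (i = a₁ ∨ i = a₂) := by
      intro i
      constructor
      · intro hi
        have hmem : i ∈ ({i | alphaVtx t i ≠ alphaVtx t' i} : Finset (Fin q)) := by
          exact Finset.mem_filter.mpr ⟨Finset.mem_univ _, by simpa [alphaVtx] using hi⟩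
        rw [hset] at hmem
        simpa using hmem
      · intro hi
        have hmem : i ∈ ({a₁, a₂} : Finset (Fin q)) := by simpa using hi
        rw [← hset] at hmem
        simpa [alphaVtx] using (Finset.mem_filter.mp hmem).2
    have ht1 : t a₁ ≠ t' a₁ := (hmemiff a₁).mpr (Or.inl rfl)
    have ht2 : t a₂ ≠ t' a₂ := (hmemiff a₂).mpr (Or.inr rfl)
    have hoth : ∀ i, i ≠ a₁ → i ≠ a₂ → t i = t' i := by
      intro i h1 h2
      by_contra h
      rcases (hmemiff i).mp h with rfl | rfl
      · exact h1 rfl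
      · exact h2 rfl
    have h1ta : t' a₁ = t a₂ := by
      obtain ⟨m, hm⟩ := t.surjective (t' a₁)
      by_cases hm1 : m = a₁
      · exact absurd (hm1 ▸ hm) ht1
      · by_cases hm2 : m = a₂
        · rw [← hm, hm2]
        · exfalso
          have := hoth m hm1 hm2
          rw [hm] at this
          exact hm1 (t'.injective this.symm)
    have h2ta : t' a₂ = t a₁ := by
      obtain ⟨m, hm⟩ := t.surjective (t' a₂)
      by_cases hm2 : m = a₂
      · exact absurd (hm2 ▸ hm) ht2
      · by_cases hm1 : m = a₁
        · rw [← hm, hm1]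
        · exfalso
          have := hoth m hm1 hm2
          rw [hm] at this
          exact hm2 (t'.injective this.symm)
    have hts : t' = Equiv.swap (t a₂) (t a₁) * t := by
      apply Equiv.ext
      intro i
      simp only [Equiv.Perm.mul_apply]
      by_cases hi1 : i = a₁
      · subst hi1
        rw [Equiv.swap_apply_right]
        exact h1ta
      · by_cases hi2 : i = a₂
        · subst hi2
          rw [Equiv.swap_apply_left]
          exact h2ta
        · rw [Equiv.swap_apply_of_ne_of_ne
            (fun hc => hi2 (t.injective hc)) (fun hc => hi1 (t.injective hc))]
          exact (hoth i hi1 hi2).symm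
    have hb₀ : t a₂ ≠ t a₁ := fun hc => ha12 (t.injective hc).symm
    set γ₀ := Function.update (⇑t) a₁ (t a₂) with hγ₀
    have hγ₀notC : γ₀ ∉ C := by
      intro hmem
      have hinj := hCinj γ₀ hmem
      have e1 : γ₀ a₁ = t a₂ := by simp [hγ₀]
      have e2 : γ₀ a₂ = t a₂ := by
        rw [hγ₀, Function.update_apply, if_neg (Ne.symm ha12)]
      exact ha12 (hinj (e1.trans e2.symm))
    have hγ₀cell : γ₀ ∈ cell C 1 :=
      distC_eq_one hγ₀notC ⟨alphaVtx t, ⟨t, htT, rfl⟩, hd_update_right hb₀⟩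
    have hcoene : (⇑t : Fin q → Fin q) ≠ ⇑t' := fun hc => htt' (Equiv.coe_fn_injective hc)
    have hS₀ : {β ∈ C | hammingDist γ₀ β = 1} = {⇑t, ⇑t'} := by
      apply Set.Subset.antisymm
      · rintro f ⟨⟨h, hhT, rfl⟩, hdist⟩
        have : h = t ∨ h = t' := by
          rcases near_perm hb₀ hdist with h1 | h2
          · exact Or.inl h1
          · exact Or.inr (by rw [h2, ← hts])
        rcases this with rfl | rfl
        · exact Set.mem_insert _ _
        · exact Set.mem_insert_of_mem _ rfl
      · intro f hf
        rcases hf with rfl | hf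
        · exact ⟨⟨t, htT, rfl⟩, hd_update_right hb₀⟩
        · rw [Set.mem_singleton_iff] at hf
          subst hf
          refine ⟨⟨t', ht'T, rfl⟩, ?_⟩
          rw [hts]
          exact hd_update_swap hb₀
    have hS₀card : {β ∈ C | hammingDist γ₀ β = 1}.ncard = 2 := by
      rw [hS₀]
      exact Set.ncard_pair hcoene
    have hclose : ∀ s ∈ T, ∀ a b : Fin q, b ≠ s a → Equiv.swap b (s a) * s ∈ T := by
      intro s hs a b hb
      set γ := Function.update (⇑s) a b with hγdef
      have hγnotC : γ ∉ C := by
        intro hmem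
        have hinj := hCinj γ hmem
        have hca : s.symm b ≠ a := fun hc => hb (by rw [← hc]; simp)
        have e1 : γ a = b := by simp [hγdef]
        have e2 : γ (s.symm b) = b := by
          rw [hγdef, Function.update_apply, if_neg hca]
          simp
        exact hca (hinj (e2.trans e1.symm))
      have hγcell : γ ∈ cell C 1 :=
        distC_eq_one hγnotC ⟨alphaVtx s, ⟨s, hs, rfl⟩, hd_update_right hb⟩
      have hcount := hreg 1 le_rfl γ hγcell γ₀ hγ₀cell 1
      rw [hS₀card] at hcount
      have hsub : {β ∈ C | hammingDist γ β = 1} ⊆ {⇑s, ⇑(Equiv.swap b (s a) * s)} := by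
        rintro f ⟨⟨h, hhT, rfl⟩, hdist⟩
        rcases near_perm hb hdist with rfl | h2
        · exact Set.mem_insert _ _
        · rw [h2]
          exact Set.mem_insert_of_mem _ rfl
      have hle2 : ({⇑s, ⇑(Equiv.swap b (s a) * s)} : Set (Fin q → Fin q)).ncard
          ≤ {β ∈ C | hammingDist γ β = 1}.ncard := by
        rw [hcount]
        exact (Set.ncard_insert_le _ _).trans (by simp)
      have heq := Set.eq_of_subset_of_ncard_le hsub hle2
      have hmem2 : ⇑(Equiv.swap b (s a) * s) ∈ {β ∈ C | hammingDist γ β = 1} := by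
        rw [heq]
        exact Set.mem_insert_of_mem _ rfl
      obtain ⟨⟨u, huT, huq⟩, -⟩ := hmem2
      rwa [show u = Equiv.swap b (s a) * s from Equiv.coe_fn_injective huq] at huT
    have hswap : ∀ s ∈ T, ∀ x y : Fin q, x ≠ y → Equiv.swap x y * s ∈ T := by
      intro s hs x y hxy
      have h1 : x ≠ s (s.symm y) := by simpa using hxy
      have := hclose s hs (s.symm y) x h1
      simpa using this
    ext s
    simp only [Set.mem_univ, iff_true]
    have hP := Equiv.Perm.swap_induction_on (motive := fun f => f * t ∈ T) (s * t⁻¹)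
      (by simpa using htT)
      (fun f x y hxy ih => by show Equiv.swap x y * f * t ∈ T; rw [mul_assoc]; exact hswap _ ih x y hxy)
    simpa using hP
  · rintro rfl
    have hCeq : permCode (Set.univ : Set (Equiv.Perm (Fin q)))
        = {f : Fin q → Fin q | Function.Bijective f} := permCode_univ
    have hCne : (permCode (Set.univ : Set (Equiv.Perm (Fin q)))).Nonempty :=
      ⟨alphaVtx 1, 1, Set.mem_univ _, rfl⟩
    constructor
    · intro i hi γ hγ γ' hγ' k
      rw [hCeq]
      interval_cases i
      · have hγb : Function.Bijective γ := by
          have := (distC_eq_zero_iff hCne γ).mp hγ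
          rwa [hCeq] at this
        have hγ'b : Function.Bijective γ' := by
          have := (distC_eq_zero_iff hCne γ').mp hγ'
          rwa [hCeq] at this
        set e := Equiv.ofBijective γ hγb with he
        set e' := Equiv.ofBijective γ' hγ'b with he'
        apply count_eq (e.symm.trans e') 1
        intro i
        simp only [Equiv.Perm.one_apply, Equiv.trans_apply]
        rw [show γ i = e i from rfl, Equiv.symm_apply_apply]
        rfl
      · obtain ⟨hγnot, β, hβC, hdβ⟩ := distC_eq_one_elim hγ
        obtain ⟨hγ'not, β', hβ'C, hdβ'⟩ := distC_eq_one_elim hγ'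
        have hβb : Function.Bijective β := by rw [hCeq] at hβC; exact hβC
        have hβ'b : Function.Bijective β' := by rw [hCeq] at hβ'C; exact hβ'C
        obtain ⟨a, hane, haeq⟩ := hd_eq_one_iff.mp hdβ
        obtain ⟨a', ha'ne, ha'eq⟩ := hd_eq_one_iff.mp hdβ'
        obtain ⟨g, hg1, hg2⟩ := exists_perm_two (x1 := β a) (x2 := γ a)
          (y1 := β' a') (y2 := γ' a') (Ne.symm hane) (Ne.symm ha'ne)
        set e := Equiv.ofBijective β hβb with he
        set σf : Fin q → Fin q := fun i => e.symm (g.symm (β' i)) with hσf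
        have hσinj : Function.Injective σf := by
          intro i j hij
          simp only [hσf] at hij
          exact hβ'b.injective (g.symm.injective (e.symm.injective hij))
        have hσa : σf a' = a := by
          rw [hσf]
          simp only
          rw [← hg1, Equiv.symm_apply_apply]
          exact e.symm_apply_apply a
        have hσprop : ∀ i, γ' i = g (γ (σf i)) := by
          intro i
          by_cases hia' : i = a'
          · subst hia'
            rw [hσa, ← hg2]
          · have hnea : σf i ≠ a := by
              intro hc
              apply hia'
              have h1 : β' i = g (e a) := by
                rw [← hc]
                simp [hσf]
              exact hβ'b.injective (h1.trans hg1)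
            have h2 : γ (σf i) = β (σf i) := haeq _ hnea
            have h3 : β (σf i) = g.symm (β' i) := by
              have h4 : β (σf i) = e (e.symm (g.symm (β' i))) := rfl
              rw [h4, Equiv.apply_symm_apply]
            rw [h2, h3, Equiv.apply_symm_apply]
            exact ha'eq i hia'
        exact count_eq g (Equiv.ofBijective σf ((Finite.injective_iff_bijective).mp hσinj))
          hσprop
    · set x0 : Fin q := ⟨0, by omega⟩ with hx0
      set x1 : Fin q := ⟨1, by omega⟩ with hx1
      have hx01 : x0 ≠ x1 := by simp [hx0, hx1, Fin.ext_iff]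
      have hd2 : hammingDist (alphaVtx (1 : Equiv.Perm (Fin q)))
          (alphaVtx (Equiv.swap x0 x1)) = 2 := by
        unfold hammingDist
        rw [Finset.card_eq_two]
        refine ⟨x0, x1, hx01, ?_⟩
        ext i
        rw [Finset.mem_filter]
        simp only [Finset.mem_filter, Finset.mem_univ, true_and, Finset.mem_insert,
          Finset.mem_singleton, alphaVtx, Equiv.Perm.one_apply]
        constructor
        · intro hi
          by_contra hc
          push_neg at hc
          exact hi (Equiv.swap_apply_of_ne_of_ne hc.1 hc.2).symm
        · rintro (rfl | rfl)
          · rw [Equiv.swap_apply_left]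
            exact hx01
          · rw [Equiv.swap_apply_right]
            exact Ne.symm hx01
      have hne12 : alphaVtx (1 : Equiv.Perm (Fin q)) ≠ alphaVtx (Equiv.swap x0 x1) := by
        intro hc
        have h := congrFun hc x0
        simp only [alphaVtx, Equiv.Perm.one_apply, Equiv.swap_apply_left] at h
        exact hx01 h
      have h2mem : (2:ℕ) ∈ {d | ∃ β ∈ permCode (Set.univ : Set (Equiv.Perm (Fin q))),
          ∃ γ ∈ permCode (Set.univ : Set (Equiv.Perm (Fin q))), β ≠ γ ∧ hammingDist β γ = d} :=
        ⟨alphaVtx 1, ⟨1, Set.mem_univ _, rfl⟩, alphaVtx (Equiv.swap x0 x1),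
          ⟨_, Set.mem_univ _, rfl⟩, hne12, hd2⟩
      apply le_antisymm
      · exact Nat.sInf_le h2mem
      · apply le_csInf ⟨2, h2mem⟩
        rintro d ⟨β, hβ, γc, hγc, hned, rfl⟩
        rw [hCeq] at hβ hγc
        exact two_le_dist hβ.injective hγc.injective hned
end
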